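/- Let g : (0,∞) → ℝ be continuous and strictly increasing with 0 < g(s) < 1 for all s > 0, let h : (0,∞) → ℝ be continuous and strictly decreasing with h(r) ≥ 1 for all r > 0, and assume ∫_0^t g(s)^{−2} ds and ∫_0^ρ h(r)^{−2} dr are finite for all t, ρ > 0. If t, ρ > 0 satisfy ∫_0^ρ h(r)^{−2} dr = ∫_0^t g(s)^{−2} ds, then ρ > t and g(t)⁴ sinh²ρ ≥ sinh²t · h(ρ)⁴. -/

import Mathlib

open Real Set MeasureTheory

lemma sinh_convex : ConvexOn ℝ (Ici (0:ℝ)) Real.sinh := by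
  apply convexOn_of_deriv2_nonneg' (convex_Ici 0)
  · exact Real.differentiable_sinh.differentiableOn
  · rw [Real.deriv_sinh]
    exact Real.differentiable_cosh.differentiableOn
  · intro x hx
    have : deriv^[2] Real.sinh = Real.sinh := by
      ext y
      simp [Function.iterate_succ, Real.deriv_sinh, Real.deriv_cosh]
    rw [this]
    exact Real.sinh_nonneg_iff.2 hx

lemma sinh_div_mono {t ρ : ℝ} (ht : 0 < t) (htρ : t ≤ ρ) :
    ρ * Real.sinh t ≤ t * Real.sinh ρ := by
  have hρ : 0 < ρ := lt_of_lt_of_le ht htρ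
  have ha0 : (0:ℝ) ≤ t / ρ := by positivity
  have ha1 : t / ρ ≤ 1 := by
    rw [div_le_one hρ]; exact htρ
  have := sinh_convex.2 (Set.self_mem_Ici) (Set.mem_Ici.2 hρ.le)
    (by linarith : (0:ℝ) ≤ 1 - t / ρ) ha0 (by ring)
  simp only [smul_eq_mul, mul_zero, zero_add, Real.sinh_zero] at this
  have h2 : t / ρ * ρ = t := div_mul_cancel₀ t (ne_of_gt hρ)
  rw [h2] at this
  calc ρ * Real.sinh t ≤ ρ * (t / ρ * Real.sinh ρ) := by
        apply mul_le_mul_of_nonneg_left this (le_of_lt hρ)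
    _ = t * Real.sinh ρ := by field_simp

theorem stmt_10 (g h : ℝ → ℝ)
    (hg_cont : ContinuousOn g (Ioi 0)) (hg_mono : StrictMonoOn g (Ioi 0))
    (hg_bnd : ∀ s ∈ Ioi (0 : ℝ), g s ∈ Ioo (0 : ℝ) 1)
    (hh_cont : ContinuousOn h (Ioi 0)) (hh_anti : StrictAntiOn h (Ioi 0))
    (hh_bnd : ∀ r ∈ Ioi (0 : ℝ), 1 ≤ h r)
    (hg_int : ∀ t : ℝ, 0 < t → IntervalIntegrable (fun s => 1 / (g s) ^ 2) volume 0 t)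
    (hh_int : ∀ ρ : ℝ, 0 < ρ → IntervalIntegrable (fun r => 1 / (h r) ^ 2) volume 0 ρ)
    (t ρ : ℝ) (ht : 0 < t) (hρ : 0 < ρ)
    (heq : (∫ r in (0 : ℝ)..ρ, 1 / (h r) ^ 2) = ∫ s in (0 : ℝ)..t, 1 / (g s) ^ 2) :
    t < ρ ∧ Real.sinh t ^ 2 * (h ρ) ^ 4 ≤ (g t) ^ 4 * Real.sinh ρ ^ 2 := by
  have hgt := hg_bnd t ht
  have hhρ := hh_bnd ρ hρ
  have hgt0 : 0 < g t := hgt.1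
  have hgt1 : g t < 1 := hgt.2
  have hhρ0 : 0 < h ρ := lt_of_lt_of_le one_pos hhρ
  -- lower bound for the g-integral
  have hgint : IntegrableOn (fun s => 1 / (g s) ^ 2) (Ioc 0 t) volume := (hg_int t ht).1
  have hhint : IntegrableOn (fun r => 1 / (h r) ^ 2) (Ioc 0 ρ) volume := (hh_int ρ hρ).1
  have hglb : t * (1 / (g t) ^ 2) ≤ ∫ s in (0 : ℝ)..t, 1 / (g s) ^ 2 := by
    rw [intervalIntegral.integral_of_le (le_of_lt ht)]
    have : ∫ s in Ioc (0:ℝ) t, (1 / (g t) ^ 2) ≤ ∫ s in Ioc (0:ℝ) t, 1 / (g s) ^ 2 := by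
      apply setIntegral_mono_on (integrableOn_const measure_Ioc_lt_top.ne) hgint
        measurableSet_Ioc
      intro s hs
      have hs0 : 0 < s := hs.1
      have hgs := hg_bnd s hs0
      have hle : g s ≤ g t := hg_mono.monotoneOn hs0 ht hs.2
      apply div_le_div_of_nonneg_left one_pos.le (pow_pos hgs.1 2)
      exact pow_le_pow_left₀ hgs.1.le hle 2
    simpa [Real.volume_Ioc, ENNReal.toReal_ofReal ht.le, max_eq_left ht.le, mul_comm] using this
  -- upper bounds for the h-integral
  have hhub : (∫ r in (0 : ℝ)..ρ, 1 / (h r) ^ 2) ≤ ρ * (1 / (h ρ) ^ 2) := by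
    rw [intervalIntegral.integral_of_le (le_of_lt hρ)]
    have : ∫ r in Ioc (0:ℝ) ρ, 1 / (h r) ^ 2 ≤ ∫ r in Ioc (0:ℝ) ρ, (1 / (h ρ) ^ 2) := by
      apply setIntegral_mono_on hhint (integrableOn_const measure_Ioc_lt_top.ne)
        measurableSet_Ioc
      intro r hr
      have hr0 : 0 < r := hr.1
      have hle : h ρ ≤ h r := hh_anti.antitoneOn hr0 hρ hr.2
      apply div_le_div_of_nonneg_left one_pos.le (pow_pos hhρ0 2)
      exact pow_le_pow_left₀ hhρ0.le hle 2
    simpa [Real.volume_Ioc, ENNReal.toReal_ofReal hρ.le, max_eq_left hρ.le, mul_comm] using this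
  have hhub1 : (∫ r in (0 : ℝ)..ρ, 1 / (h r) ^ 2) ≤ ρ := by
    calc (∫ r in (0 : ℝ)..ρ, 1 / (h r) ^ 2) ≤ ρ * (1 / (h ρ) ^ 2) := hhub
      _ ≤ ρ * 1 := by
          apply mul_le_mul_of_nonneg_left _ hρ.le
          rw [div_le_one (by positivity)]
          nlinarith
      _ = ρ := mul_one ρ
  -- t < ρ
  have hkey : t * (1 / (g t) ^ 2) ≤ ρ * (1 / (h ρ) ^ 2) := by
    calc t * (1 / (g t) ^ 2) ≤ ∫ s in (0 : ℝ)..t, 1 / (g s) ^ 2 := hglb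
      _ = ∫ r in (0 : ℝ)..ρ, 1 / (h r) ^ 2 := heq.symm
      _ ≤ ρ * (1 / (h ρ) ^ 2) := hhub
  have htρ : t < ρ := by
    have h1 : t < t * (1 / (g t) ^ 2) := by
      have : 1 < 1 / (g t) ^ 2 := by
        rw [lt_div_iff₀ (by positivity), one_mul]
        nlinarith
      nlinarith
    calc t < t * (1 / (g t) ^ 2) := h1
      _ ≤ ∫ s in (0 : ℝ)..t, 1 / (g s) ^ 2 := hglb
      _ = ∫ r in (0 : ℝ)..ρ, 1 / (h r) ^ 2 := heq.symm
      _ ≤ ρ := hhub1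
  refine ⟨htρ, ?_⟩
  -- t * h ρ ^ 2 ≤ ρ * g t ^ 2
  have hmul : t * (h ρ) ^ 2 ≤ ρ * (g t) ^ 2 := by
    have := hkey
    rw [mul_one_div, mul_one_div, div_le_div_iff₀ (by positivity) (by positivity)] at this
    linarith
  have hsinh : ρ * Real.sinh t ≤ t * Real.sinh ρ := sinh_div_mono ht htρ.le
  -- combine: sinh t * h ρ ^ 2 ≤ g t ^ 2 * sinh ρ
  have hst : 0 < Real.sinh t := Real.sinh_pos_iff.2 ht
  have hsρ : 0 < Real.sinh ρ := Real.sinh_pos_iff.2 hρ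
  have hmain : Real.sinh t * (h ρ) ^ 2 ≤ (g t) ^ 2 * Real.sinh ρ := by
    have h1 : ρ * (Real.sinh t * (h ρ) ^ 2) ≤ ρ * ((g t) ^ 2 * Real.sinh ρ) := by
      calc ρ * (Real.sinh t * (h ρ) ^ 2) = (ρ * Real.sinh t) * (h ρ) ^ 2 := by ring
        _ ≤ (t * Real.sinh ρ) * (h ρ) ^ 2 := by
            apply mul_le_mul_of_nonneg_right hsinh (by positivity)
        _ = (t * (h ρ) ^ 2) * Real.sinh ρ := by ring
        _ ≤ (ρ * (g t) ^ 2) * Real.sinh ρ := by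
            apply mul_le_mul_of_nonneg_right hmul hsρ.le
        _ = ρ * ((g t) ^ 2 * Real.sinh ρ) := by ring
    exact le_of_mul_le_mul_left h1 hρ
  -- square
  have := mul_self_le_mul_self (by positivity) hmain
  nlinarith [this]
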